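/- Let X, Y be finite nonempty sets and f : X × Y → {0,1}. If X × Y can be partitioned into N rectangles, each of which is monochromatic for f, then rank(f) ≤ N. -/

import Mathlib

/-- The real rank of the 0/1 matrix associated to a boolean function `f : X → Y → Bool`. -/
noncomputable def rankOf {X Y : Type*} [Fintype X] [Fintype Y] (f : X → Y → Bool) : ℕ :=
  (Matrix.of (fun x y => if f x y then (1 : ℝ) else 0)).rank

lemma my_rank_add_le {X Y : Type*} [Fintype X] [Fintype Y] (A B : Matrix X Y ℝ) :
    (A + B).rank ≤ A.rank + B.rank := by
  classical
  unfold Matrix.rank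
  have h : LinearMap.range (A + B).mulVecLin ≤
      LinearMap.range A.mulVecLin ⊔ LinearMap.range B.mulVecLin := by
    rintro _ ⟨v, rfl⟩
    rw [Matrix.mulVecLin_add]
    exact Submodule.add_mem_sup ⟨v, rfl⟩ ⟨v, rfl⟩
  calc Module.finrank ℝ (LinearMap.range (A + B).mulVecLin)
      ≤ Module.finrank ℝ (LinearMap.range A.mulVecLin ⊔ LinearMap.range B.mulVecLin :
        Submodule ℝ (X → ℝ)) := Submodule.finrank_mono h
    _ ≤ _ := Submodule.finrank_add_le_finrank_add_finrank _ _

lemma my_rank_sum_le {X Y ι : Type*} [Fintype X] [Fintype Y] (s : Finset ι)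
    (M : ι → Matrix X Y ℝ) : (∑ i ∈ s, M i).rank ≤ ∑ i ∈ s, (M i).rank := by
  classical
  induction s using Finset.induction with
  | empty => simp [Matrix.rank_zero]
  | insert _ _ h ih =>
    rw [Finset.sum_insert h, Finset.sum_insert h]
    exact (my_rank_add_le _ _).trans (Nat.add_le_add_left ih _)

lemma my_rank_vecMulVec_le {X Y : Type*} [Fintype X] [Fintype Y] (w : X → ℝ) (v : Y → ℝ) :
    (Matrix.vecMulVec w v).rank ≤ 1 := by
  rw [Matrix.vecMulVec_eq (Fin 1)]
  calc (Matrix.replicateCol (Fin 1) w * Matrix.replicateRow (Fin 1) v).rank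
      ≤ (Matrix.replicateRow (Fin 1) v).rank := Matrix.rank_mul_le_right _ _
    _ ≤ Fintype.card (Fin 1) := Matrix.rank_le_card_height _
    _ = 1 := by simp

/-- If `X × Y` is partitioned into `N` rectangles, each monochromatic for `f`, then
`rank(f) ≤ N`. -/
theorem rank_le_number_of_monochromatic_rectangles
    (X Y : Type) [Fintype X] [Fintype Y] [Nonempty X] [Nonempty Y]
    (f : X → Y → Bool) (N : ℕ) (R : Fin N → Finset X × Finset Y)
    (hpart : ∀ p : X × Y, ∃! i : Fin N, p.1 ∈ (R i).1 ∧ p.2 ∈ (R i).2)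
    (hmono : ∀ i : Fin N, ∀ x ∈ (R i).1, ∀ y ∈ (R i).2, ∀ x' ∈ (R i).1, ∀ y' ∈ (R i).2,
      f x y = f x' y') :
    rankOf f ≤ N := by
  classical
  -- the value of f on rectangle i (as a real number)
  set c : Fin N → ℝ := fun i =>
    if h : ((R i).1 ×ˢ (R i).2).Nonempty then
      (if f h.choose.1 h.choose.2 then (1 : ℝ) else 0) else 0 with hc
  set w : Fin N → X → ℝ := fun i x => if x ∈ (R i).1 then c i else 0 with hw
  set v : Fin N → Y → ℝ := fun i y => if y ∈ (R i).2 then (1 : ℝ) else 0 with hv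
  have hdecomp : (Matrix.of (fun x y => if f x y then (1 : ℝ) else 0)) =
      ∑ i : Fin N, Matrix.vecMulVec (w i) (v i) := by
    ext x y
    rw [Matrix.sum_apply]
    obtain ⟨i₀, hi₀, huniq⟩ := hpart (x, y)
    rw [Finset.sum_eq_single_of_mem i₀ (Finset.mem_univ _)]
    · simp only [Matrix.vecMulVec_apply, hw, hv, hi₀.1, hi₀.2, if_pos]
      have hne : ((R i₀).1 ×ˢ (R i₀).2).Nonempty := ⟨(x, y), Finset.mk_mem_product hi₀.1 hi₀.2⟩
      have hch := hne.choose_spec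
      rw [Finset.mem_product] at hch
      have : f x y = f hne.choose.1 hne.choose.2 :=
        hmono i₀ x hi₀.1 y hi₀.2 _ hch.1 _ hch.2
      rw [hc]
      simp only
      rw [dif_pos hne, ← this, mul_one]; rfl
    · intro j _ hj
      have : ¬ (x ∈ (R j).1 ∧ y ∈ (R j).2) := fun h => hj (huniq j h)
      simp only [Matrix.vecMulVec_apply, hw, hv]
      by_cases h1 : x ∈ (R j).1 <;> by_cases h2 : y ∈ (R j).2 <;>
        simp [h1, h2] at this ⊢
  calc rankOf f = (∑ i : Fin N, Matrix.vecMulVec (w i) (v i)).rank := by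
        rw [rankOf, hdecomp]
    _ ≤ ∑ i : Fin N, (Matrix.vecMulVec (w i) (v i)).rank := my_rank_sum_le _ _
    _ ≤ ∑ _i : Fin N, 1 := Finset.sum_le_sum (fun i _ => my_rank_vecMulVec_le _ _)
    _ = N := by simp
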